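/- Let ω ∈ {0,1}^ℕ be a lawless path (lawful for no algorithm). Then liminf_{n→∞} (1/n)∑_{k=1}^{n} ω_k = 0 and limsup_{n→∞} (1/n)∑_{k=1}^{n} ω_k = 1. -/

import Mathlib

open Filter

noncomputable section

/-- Situations: finite binary strings. -/
abbrev Situation : Type := List Bool

/-- Paths: infinite binary sequences. -/
abbrev BitPath : Type := ℕ → Bool

/-- The first `n` outcomes of a path. -/
def pref (ω : BitPath) (n : ℕ) : Situation := (List.range n).map ω

/-- The real value of a bit. -/
def bval (b : Bool) : ℝ := if b then 1 else 0

/-- Precise expectation of a gamble on `{0,1}` with respect to a forecast `p`. -/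
def Ep (p : ℝ) (f : Bool → ℝ) : ℝ := p * f true + (1 - p) * f false

/-- Interval forecast: a nonempty closed subinterval of `[0,1]`. -/
def IsForecast (I : Set ℝ) : Prop :=
  ∃ l u : ℝ, 0 ≤ l ∧ l ≤ u ∧ u ≤ 1 ∧ I = Set.Icc l u

/-- Upper expectation associated with an interval forecast. -/
def upperExp (I : Set ℝ) (f : Bool → ℝ) : ℝ := sSup ((fun p => Ep p f) '' I)

/-- Lower expectation associated with an interval forecast. -/
def lowerExp (I : Set ℝ) (f : Bool → ℝ) : ℝ := sInf ((fun p => Ep p f) '' I)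

/-- Forecasting systems. -/
abbrev ForecastingSystem : Type := Situation → Set ℝ

def IsForecastingSystem (Γ : ForecastingSystem) : Prop := ∀ s, IsForecast (Γ s)

/-- Supermartingale for a forecasting system. -/
def Supermartingale (Γ : ForecastingSystem) (M : Situation → ℝ) : Prop :=
  ∀ s : Situation, upperExp (Γ s) (fun x => M (s ++ [x]) - M s) ≤ 0

/-- Submartingale for a forecasting system. -/
def Submartingale (Γ : ForecastingSystem) (M : Situation → ℝ) : Prop :=
  ∀ s : Situation, 0 ≤ lowerExp (Γ s) (fun x => M (s ++ [x]) - M s)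

/-- Test process: nonnegative with unit initial value. -/
def TestProcess (M : Situation → ℝ) : Prop := (∀ s, 0 ≤ M s) ∧ M [] = 1

/-- Test supermartingale. -/
def TestSupermartingale (Γ : ForecastingSystem) (M : Situation → ℝ) : Prop :=
  TestProcess M ∧ Supermartingale Γ M

/-- Computable real process. -/
def ComputableProcess (F : Situation → ℝ) : Prop :=
  ∃ r : Situation × ℕ → ℚ, ∃ e : Situation × ℕ → ℕ,
    Computable r ∧ Computable e ∧
    ∀ s n N, e (s, N) ≤ n → |(r (s, n) : ℝ) - F s| ≤ (2 : ℝ) ^ (-(N : ℤ))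

/-- Lower semicomputable real process. -/
def LowerSemicomputableProcess (F : Situation → ℝ) : Prop :=
  ∃ r : Situation × ℕ → ℚ, Computable r ∧
    (∀ s n, r (s, n) ≤ r (s, n + 1)) ∧
    ∀ s, Filter.Tendsto (fun n => (r (s, n) : ℝ)) Filter.atTop (nhds (F s))

def UpperSemicomputableProcess (F : Situation → ℝ) : Prop :=
  LowerSemicomputableProcess (fun s => -F s)

def ComputableReal (x : ℝ) : Prop := ComputableProcess (fun _ => x)
def LowerSemicomputableReal (x : ℝ) : Prop := LowerSemicomputableProcess (fun _ => x)
def UpperSemicomputableReal (x : ℝ) : Prop := UpperSemicomputableProcess (fun _ => x)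

/-- Computable real sequence. -/
def ComputableSeq (τ : ℕ → ℝ) : Prop :=
  ∃ r : ℕ × ℕ → ℚ, ∃ e : ℕ × ℕ → ℕ,
    Computable r ∧ Computable e ∧
    ∀ k n N, e (k, N) ≤ n → |(r (k, n) : ℝ) - τ k| ≤ (2 : ℝ) ^ (-(N : ℤ))

/-- Computable forecasting system. -/
def ComputableForecastingSystem (Γ : ForecastingSystem) : Prop :=
  ComputableProcess (fun s => sInf (Γ s)) ∧ ComputableProcess (fun s => sSup (Γ s))

/-- Growth function: computable, nondecreasing and unbounded. -/
def GrowthFunction (ρ : ℕ → ℕ) : Prop :=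
  Computable ρ ∧ Monotone ρ ∧ ∀ m : ℕ, ∃ n, m < ρ n

/-- Real growth function: computable, nondecreasing, nonnegative and unbounded. -/
def RealGrowthFunction (τ : ℕ → ℝ) : Prop :=
  ComputableSeq τ ∧ Monotone τ ∧ (∀ n, 0 ≤ τ n) ∧ ∀ B : ℝ, ∃ n, B < τ n

/-- Computably unbounded real-valued map. -/
def ComputablyUnbounded (μ : ℕ → ℝ) : Prop :=
  ∃ ρ : ℕ → ℕ, GrowthFunction ρ ∧
    (0 : EReal) < Filter.limsup (fun n => ((μ n - (ρ n : ℝ) : ℝ) : EReal)) Filter.atTop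

def ComputablyUnboundedOn (T : Situation → ℝ) (ω : BitPath) : Prop :=
  ComputablyUnbounded (fun n => T (pref ω n))

def BoundedAboveOn (T : Situation → ℝ) (ω : BitPath) : Prop :=
  ∃ B : ℝ, ∀ n, T (pref ω n) ≤ B

/-- Schnorr randomness of a path for a forecasting system. -/
def SchnorrRandom (ω : BitPath) (Γ : ForecastingSystem) : Prop :=
  ∀ T : Situation → ℝ, ComputableProcess T → TestSupermartingale Γ T →
    ¬ ComputablyUnboundedOn T ω

/-- Computable randomness of a path for a forecasting system. -/
def ComputablyRandom (ω : BitPath) (Γ : ForecastingSystem) : Prop :=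
  ∀ T : Situation → ℝ, ComputableProcess T → TestSupermartingale Γ T →
    BoundedAboveOn T ω

/-- Global upper expectation. -/
def upperExpGlobal (Γ : ForecastingSystem) (g : BitPath → ℝ) : ℝ :=
  sInf {x : ℝ | ∃ M : Situation → ℝ, Supermartingale Γ M ∧ x = M [] ∧
    ∀ ω : BitPath, (g ω : EReal) ≤
      Filter.liminf (fun n => ((M (pref ω n) : ℝ) : EReal)) Filter.atTop}

/-- Global lower expectation. -/
def lowerExpGlobal (Γ : ForecastingSystem) (g : BitPath → ℝ) : ℝ :=
  sSup {x : ℝ | ∃ M : Situation → ℝ, Submartingale Γ M ∧ x = M [] ∧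
    ∀ ω : BitPath,
      Filter.limsup (fun n => ((M (pref ω n) : ℝ) : EReal)) Filter.atTop ≤ (g ω : EReal)}

/-- Global upper probability. -/
def upperProb (Γ : ForecastingSystem) (A : Set BitPath) : ℝ :=
  upperExpGlobal Γ (Set.indicator A fun _ => 1)

/-- Number of selected situations along (the prefixes of) a situation. -/
def selSum (S : Situation → Bool) (s : Situation) : ℝ :=
  ∑ k ∈ Finset.range s.length, bval (S (s.take k))

/-- Selected average of process differences along a situation. -/
def selAvg (S : Situation → Bool) (M : Situation → ℝ) (s : Situation) : ℝ :=
  if 0 < selSum S s then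
    (∑ k ∈ Finset.range s.length,
      bval (S (s.take k)) * (M (s.take (k + 1)) - M (s.take k))) / selSum S s
  else 0

/-- Cylinder set of a situation. -/
def cyl (t : Situation) : Set BitPath := {ω | pref ω t.length = t}

/-- Lawful path. -/
def Lawful (ω : BitPath) : Prop :=
  ∃ R : Situation →. List Situation, Partrec R ∧
    ∀ m : ℕ, ∃ L : List Situation, L ∈ R (pref ω m) ∧
      L ≠ [] ∧
      (∀ t ∈ L, pref ω m <+: t ∧ pref ω m ≠ t) ∧
      ((⋃ t ∈ L, cyl t) ⊂ cyl (pref ω m)) ∧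
      ∃ t ∈ L, ω ∈ cyl t

namespace Lawless18

lemma pref_length (ω : BitPath) (n : ℕ) : (pref ω n).length = n := by simp [pref]

lemma pref_succ (ω : BitPath) (n : ℕ) : pref ω (n+1) = pref ω n ++ [ω n] := by
  simp [pref, List.range_succ]

lemma pref_take (ω : BitPath) {m n : ℕ} (h : m ≤ n) : (pref ω n).take m = pref ω m := by
  simp [pref, ← List.map_take, List.take_range, Nat.min_eq_left h]

lemma mem_cyl {ω : BitPath} {t : Situation} : ω ∈ cyl t ↔ pref ω t.length = t := Iff.rfl

lemma cyl_mono {s t : Situation} (h : s <+: t) : cyl t ⊆ cyl s := by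
  intro x hx
  have hlen : s.length ≤ t.length := h.length_le
  have h2 : (pref x t.length).take s.length = t.take s.length := by
    rw [mem_cyl] at hx; rw [hx]
  rw [pref_take x hlen] at h2
  rw [mem_cyl]
  show pref x s.length = s
  rw [h2]; exact (List.prefix_iff_eq_take.mp h).symm

lemma pref_congr {ω₁ ω₂ : BitPath} {n : ℕ} (h : ∀ i < n, ω₁ i = ω₂ i) :
    pref ω₁ n = pref ω₂ n :=
  List.map_congr_left fun i hi => h i (List.mem_range.mp hi)

lemma pref_run {ω : BitPath} {m j : ℕ} {x : Bool} (h : ∀ i, m ≤ i → i < m + j → ω i = x) :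
    pref ω (m + j) = pref ω m ++ List.replicate j x := by
  induction j with
  | zero => simp
  | succ j ih =>
    have h' : ∀ i, m ≤ i → i < m + j → ω i = x := fun i h1 h2 => h i h1 (by omega)
    rw [← Nat.add_assoc, pref_succ, ih h', h (m+j) (by omega) (by omega),
      List.replicate_succ', List.append_assoc]

def cnt (ω : BitPath) (b : Bool) (n : ℕ) : ℕ :=
  ((Finset.range n).filter fun k => ω k = b).card

lemma computable_f (b : Bool) (c N : ℕ) :
    Computable (fun s : Situation =>
      (List.range (c * s.length + (N + 1))).map
        (fun j => s ++ ((List.range j).map (fun _ => !b) ++ [b]))) := by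
  have hlen : Primrec (fun s : Situation => c * s.length + (N + 1)) :=
    Primrec.nat_add.comp (Primrec.nat_mul.comp (Primrec.const c) Primrec.list_length)
      (Primrec.const (N + 1))
  have hg : Primrec₂ (fun (s : Situation) (j : ℕ) =>
      s ++ ((List.range j).map (fun _ => !b) ++ [b])) := by
    have h1 : Primrec (fun p : Situation × ℕ => (List.range p.2).map (fun _ => !b)) :=
      Primrec.list_map (Primrec.list_range.comp Primrec.snd) (Primrec₂.const (!b))
    exact Primrec.list_append.comp Primrec.fst
      (Primrec.list_append.comp h1 (Primrec.const [b]))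
  exact Primrec.to_comp (Primrec.list_map (Primrec.list_range.comp hlen) hg)

lemma lawful_of_density (ω : BitPath) (b : Bool) (c N : ℕ)
    (hd : ∀ n, N ≤ n → n ≤ c * cnt ω b n) : Lawful ω := by
  classical
  have hwin : ∀ m : ℕ, ∃ j, j < c * m + (N + 1) ∧ ω (m + j) = b := by
    intro m
    by_contra hno
    push_neg at hno
    set k := c * m + (N + 1) with hk
    have hsub : (Finset.range (m + k)).filter (fun i => ω i = b) ⊆ Finset.range m := by
      intro i hi
      simp only [Finset.mem_filter, Finset.mem_range] at hi ⊢
      rcases Nat.lt_or_ge i m with h | h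
      · exact h
      · exact absurd (by rw [Nat.add_sub_cancel' h]; exact hi.2) (hno (i - m) (by omega))
    have h1 : cnt ω b (m + k) ≤ m := by
      have := Finset.card_le_card hsub
      simpa [cnt] using this
    have h2 := hd (m + k) (by omega)
    have h3 := Nat.mul_le_mul_left c h1
    omega
  set f : Situation → List Situation := fun s =>
    (List.range (c * s.length + (N + 1))).map
      (fun j => s ++ ((List.range j).map (fun _ => !b) ++ [b])) with hf
  refine ⟨fun s => Part.some (f s), computable_f b c N, ?_⟩
  intro m
  set s := pref ω m with hs
  have hslen : s.length = m := pref_length ω m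
  set K := c * m + (N + 1) with hK
  have hmem : ∀ t, t ∈ f s ↔ ∃ j < K, t = s ++ (List.replicate j (!b) ++ [b]) := by
    intro t
    simp only [hf, List.mem_map, List.mem_range, hslen]
    constructor
    · rintro ⟨j, hj, rfl⟩; exact ⟨j, hj, by simp⟩
    · rintro ⟨j, hj, rfl⟩; exact ⟨j, hj, by simp⟩
  obtain ⟨j0, hj0K, hj0b, hj0min⟩ : ∃ j, j < K ∧ ω (m + j) = b ∧ ∀ i < j, ω (m + i) = !b := by
    obtain ⟨j, hjK, hjb⟩ := hwin m
    have hex : ∃ j, ω (m + j) = b := ⟨j, hjb⟩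
    refine ⟨Nat.find hex, lt_of_le_of_lt (Nat.find_le hjb) hjK, Nat.find_spec hex, ?_⟩
    intro i hi
    have := Nat.find_min hex hi
    cases hb : ω (m + i) <;> cases b <;> simp_all
  have hne : f s ≠ [] := by
    have hlen : (f s).length = K := by simp [hf, hslen, hK]
    intro h
    rw [h] at hlen
    simp at hlen
  have hpref : ∀ t ∈ f s, s <+: t ∧ s ≠ t := by
    intro t ht
    obtain ⟨j, _, rfl⟩ := (hmem t).mp ht
    refine ⟨List.prefix_append _ _, ?_⟩
    intro h
    have := congrArg List.length h
    simp at this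
  have hsubset : (⋃ t ∈ f s, cyl t) ⊆ cyl s := by
    intro x hx
    simp only [Set.mem_iUnion, exists_prop] at hx
    obtain ⟨t, ht, hxt⟩ := hx
    exact cyl_mono ((hpref t ht).1) hxt
  set ω' : BitPath := fun i => if i < m then ω i else !b with hω'
  have hpref' : pref ω' m = s := by
    rw [hs]
    exact pref_congr (fun i hi => by simp [hω', hi])
  have hω's : ω' ∈ cyl s := by rw [mem_cyl, hslen]; exact hpref'
  have hω'not : ω' ∉ ⋃ t ∈ f s, cyl t := by
    simp only [Set.mem_iUnion, exists_prop, not_exists, not_and]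
    rintro t ht hxt
    obtain ⟨j, hj, rfl⟩ := (hmem t).mp ht
    rw [mem_cyl] at hxt
    have hlen : (s ++ (List.replicate j (!b) ++ [b])).length = m + (j + 1) := by
      simp [hslen]
    rw [hlen] at hxt
    have hrun : pref ω' (m + (j + 1)) = pref ω' m ++ List.replicate (j+1) (!b) :=
      pref_run (fun i h1 _ => by simp [hω', Nat.not_lt.mpr h1])
    rw [hrun, hpref', List.replicate_succ'] at hxt
    have h1 := List.append_cancel_left hxt
    have h2 := List.append_cancel_left h1
    simp at h2
  have hstrict : (⋃ t ∈ f s, cyl t) ⊂ cyl s := by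
    rw [Set.ssubset_def]
    exact ⟨hsubset, fun hle => hω'not (hle hω's)⟩
  refine ⟨f s, Part.mem_some _, hne, hpref, hstrict, ?_⟩
  refine ⟨s ++ (List.replicate j0 (!b) ++ [b]), (hmem _).mpr ⟨j0, hj0K, rfl⟩, ?_⟩
  rw [mem_cyl]
  have hlen : (s ++ (List.replicate j0 (!b) ++ [b])).length = (m + j0) + 1 := by
    simp [hslen]; omega
  have hrun : pref ω (m + j0) = s ++ List.replicate j0 (!b) := by
    rw [hs]
    exact pref_run (fun i h1 h2 => by
      have := hj0min (i - m) (by omega)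
      rwa [Nat.add_sub_cancel' h1] at this)
  rw [hlen, pref_succ, hrun, hj0b, List.append_assoc]

lemma lawful_of_eventually (ω : BitPath) (b : Bool) (ε : ℝ) (hε : 0 < ε)
    (h : ∀ᶠ n in atTop, ε * n ≤ (cnt ω b n : ℝ)) : Lawful ω := by
  obtain ⟨c, hc⟩ := exists_nat_gt (1 / ε)
  obtain ⟨N, hN⟩ := eventually_atTop.mp h
  apply lawful_of_density ω b c N
  intro n hn
  have h1 : ε * n ≤ (cnt ω b n : ℝ) := hN n hn
  have h2 : (n : ℝ) ≤ (c : ℝ) * cnt ω b n := by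
    have hc' : 1 / ε ≤ c := le_of_lt hc
    have he : (n:ℝ) = 1/ε * (ε * n) := by field_simp
    calc (n:ℝ) = 1/ε * (ε * n) := he
    _ ≤ c * (ε * n) := by
        apply mul_le_mul_of_nonneg_right hc'
        positivity
    _ ≤ c * cnt ω b n := by
        apply mul_le_mul_of_nonneg_left h1
        have : (0:ℝ) < c := lt_of_le_of_lt (by positivity) hc
        linarith
  exact_mod_cast h2

lemma cnt_add (ω : BitPath) (n : ℕ) : cnt ω true n + cnt ω false n = n := by
  classical
  have h2 : cnt ω false n = ((Finset.range n).filter fun k => ¬ (ω k = true)).card := by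
    unfold cnt
    congr 1
    apply Finset.filter_congr
    intro k _
    simp
  rw [cnt, h2, Finset.card_filter_add_card_filter_not, Finset.card_range]

lemma sum_eq_cnt (ω : BitPath) (n : ℕ) :
    (∑ k ∈ Finset.range n, bval (ω k)) = (cnt ω true n : ℝ) := by
  unfold cnt bval
  rw [← Finset.sum_boole]

end Lawless18

open Lawless18

theorem stmt_18 (ω : BitPath) (hω : ¬ Lawful ω) :
    Filter.liminf (fun n => (∑ k ∈ Finset.range n, bval (ω k)) / (n : ℝ))
      Filter.atTop = 0 ∧
    Filter.limsup (fun n => (∑ k ∈ Finset.range n, bval (ω k)) / (n : ℝ))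
      Filter.atTop = 1 := by
  classical
  set u : ℕ → ℝ := fun n => (∑ k ∈ Finset.range n, bval (ω k)) / (n : ℝ) with hu
  have hun : ∀ n : ℕ, u n = (cnt ω true n : ℝ) / n := by
    intro n; rw [hu]; simp only [sum_eq_cnt]
  have h0 : ∀ n, 0 ≤ u n := by
    intro n; rw [hun]; positivity
  have h1 : ∀ n, u n ≤ 1 := by
    intro n
    rcases Nat.eq_zero_or_pos n with rfl | hn
    · simp [hun]
    · rw [hun]
      apply div_le_one_of_le₀
      · exact_mod_cast Nat.le_trans (Finset.card_filter_le _ _) (by simp)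
      · positivity
  have hb1 : IsBoundedUnder (· ≤ ·) atTop u := isBoundedUnder_of ⟨1, h1⟩
  have hb0 : IsBoundedUnder (· ≥ ·) atTop u := isBoundedUnder_of ⟨0, h0⟩
  have hli0 : 0 ≤ liminf u atTop :=
    le_liminf_of_le hb1.isCoboundedUnder_ge (Eventually.of_forall h0)
  have hls1 : limsup u atTop ≤ 1 :=
    limsup_le_of_le hb0.isCoboundedUnder_le (Eventually.of_forall h1)
  constructor
  · by_contra hne
    have hpos : 0 < liminf u atTop := lt_of_le_of_ne hli0 (Ne.symm hne)
    have hev : ∀ᶠ n in atTop, liminf u atTop / 2 < u n :=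
      eventually_lt_of_lt_liminf (half_lt_self hpos) hb0
    apply hω
    apply lawful_of_eventually ω true _ (half_pos hpos)
    filter_upwards [hev, eventually_ge_atTop 1] with n hn hn1
    have hn0 : (0:ℝ) < n := by exact_mod_cast hn1
    have hcn : u n * n = (cnt ω true n : ℝ) := by
      rw [hun, div_mul_cancel₀ _ (ne_of_gt hn0)]
    nlinarith
  · by_contra hne
    have hlt : limsup u atTop < 1 := lt_of_le_of_ne hls1 hne
    set a := limsup u atTop with ha
    have hev : ∀ᶠ n in atTop, u n < (a + 1) / 2 :=
      eventually_lt_of_limsup_lt (by linarith) hb1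
    apply hω
    apply lawful_of_eventually ω false ((1 - a) / 2) (by linarith)
    filter_upwards [hev, eventually_ge_atTop 1] with n hn hn1
    have hn0 : (0:ℝ) < n := by exact_mod_cast hn1
    have hcn : u n * n = (cnt ω true n : ℝ) := by
      rw [hun, div_mul_cancel₀ _ (ne_of_gt hn0)]
    have hadd : (cnt ω true n : ℝ) + (cnt ω false n : ℝ) = n := by
      exact_mod_cast congrArg (Nat.cast : ℕ → ℝ) (cnt_add ω n)
    nlinarith
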